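/- Let g be CN-war-stable with equal strengths and γ ≥ 1, and let i be a vertex of maximum degree with a link ij ∈ g. Then any clique C in g − ij witnessing the CN-vulnerability of i in g − ij (i.e., |C| > γ·(1 + |N_i(g−ij)\C|), i ∉ C) must satisfy C ∩ N_i(g−ij) ≠ ∅, i ∉ C, and j ∉ C. -/
import Mathlib


open Finset

/-- The allies (neighbors) of `i` in network `g`, as a `Finset`. -/
noncomputable def nbrs {V : Type*} [Fintype V] (g : SimpleGraph V) (i : V) : Finset V :=
  @Finset.filter _ (fun j => g.Adj i j) (Classical.decPred _) Finset.univ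

/-- The network `g` with the alliance `jk` added. -/
def addE {V : Type*} (g : SimpleGraph V) (j k : V) : SimpleGraph V :=
  g ⊔ SimpleGraph.fromEdgeSet {s(j, k)}

/-- The network `g` with the alliance `jk` deleted. -/
def delE {V : Type*} (g : SimpleGraph V) (j k : V) : SimpleGraph V :=
  g.deleteEdges {s(j, k)}

/-- CN-vulnerability with uniform strengths `M C = |C|` and constant `γ`:
country `i` is CN-vulnerable at `g` if some clique `C` of `g` not containing `i`
satisfies `|C| > γ · (1 + |N_i(g) \ C|)`. -/
def CNVul {V : Type*} [Fintype V] [DecidableEq V] (g : SimpleGraph V) (γ : ℝ) (i : V) :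
    Prop :=
  ∃ C : Finset V, g.IsClique ↑C ∧ i ∉ C ∧
    γ * (1 + ((nbrs g i) \ C).card) < (C.card : ℝ)

/-- CN-war-stability: (S1) no country CN-vulnerable; (S2) no country CN-vulnerable after
adding any non-link; (S3) both endpoints of any link become CN-vulnerable upon its
deletion. -/
def CNWarStable {V : Type*} [Fintype V] [DecidableEq V] (g : SimpleGraph V) (γ : ℝ) :
    Prop :=
  (∀ v : V, ¬ CNVul g γ v) ∧
  (∀ j k : V, j ≠ k → ¬ g.Adj j k → ∀ v : V, ¬ CNVul (addE g j k) γ v) ∧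
  (∀ j k : V, g.Adj j k → CNVul (delE g j k) γ j ∧ CNVul (delE g j k) γ k)

lemma mem_nbrs {V : Type*} [Fintype V] (g : SimpleGraph V) (i x : V) :
    x ∈ nbrs g i ↔ g.Adj i x := by
  simp [nbrs]

lemma nbrs_delE {V : Type*} [Fintype V] [DecidableEq V] (g : SimpleGraph V) (i j : V) :
    nbrs (delE g i j) i = (nbrs g i).erase j := by
  ext x
  simp only [mem_nbrs, delE, SimpleGraph.deleteEdges_adj, Set.mem_singleton_iff,
    Finset.mem_erase, Sym2.congr_right]
  tauto

lemma nbrs_addE_other {V : Type*} [Fintype V] (g : SimpleGraph V) (i c j : V)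
    (hji : j ≠ i) (hjc : j ≠ c) : nbrs (addE g i c) j = nbrs g j := by
  ext x
  simp only [mem_nbrs, addE, SimpleGraph.sup_adj, SimpleGraph.fromEdgeSet_adj,
    Set.mem_singleton_iff, Sym2.eq, Sym2.rel_iff', Prod.mk.injEq, Prod.swap_prod_mk]
  constructor
  · rintro (h | ⟨(⟨rfl, rfl⟩ | ⟨rfl, rfl⟩), hne⟩)
    · exact h
    · exact absurd rfl hji
    · exact absurd rfl hjc
  · exact Or.inl

/-- Claim 1: if `g` is CN-war-stable, `i` has maximum degree, `ij ∈ g`, and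
`C` is a clique of `g - ij` witnessing `i`'s CN-vulnerability there, then `C` meets the
remaining neighbors of `i`, and contains neither `i` nor `j`. -/
theorem claim_one {n : ℕ} (hn : 3 ≤ n) (γ : ℝ) (hγ : 1 ≤ γ)
    (g : SimpleGraph (Fin n)) (hstable : CNWarStable g γ)
    (i j : Fin n) (hmax : ∀ v : Fin n, (nbrs g v).card ≤ (nbrs g i).card)
    (hij : g.Adj i j)
    (C : Finset (Fin n)) (hclique : (delE g i j).IsClique ↑C) (hiC : i ∉ C)
    (hwin : γ * (1 + ((nbrs (delE g i j) i) \ C).card) < (C.card : ℝ)) :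
    (C ∩ nbrs (delE g i j) i).Nonempty ∧ i ∉ C ∧ j ∉ C := by
  obtain ⟨hS1, hS2, hS3⟩ := hstable
  have hne : i ≠ j := g.ne_of_adj hij
  have hCg : g.IsClique ↑C := hclique.mono (SimpleGraph.deleteEdges_le _)
  have hjn : j ∈ nbrs g i := (mem_nbrs g i j).2 hij
  -- j ∉ C
  have hjC : j ∉ C := by
    intro hjC
    apply hS1 i
    refine ⟨C, hCg, hiC, ?_⟩
    have : nbrs g i \ C = nbrs (delE g i j) i \ C := by
      rw [nbrs_delE]
      ext x
      simp only [Finset.mem_sdiff, Finset.mem_erase]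
      constructor
      · rintro ⟨hx, hxC⟩
        exact ⟨⟨fun h => hxC (h ▸ hjC), hx⟩, hxC⟩
      · rintro ⟨⟨_, hx⟩, hxC⟩; exact ⟨hx, hxC⟩
    rw [this]; exact hwin
  refine ⟨?_, hiC, hjC⟩
  by_contra hCN
  rw [Finset.not_nonempty_iff_eq_empty] at hCN
  -- C is disjoint from nbrs g i
  have hdisj : ∀ x ∈ C, x ∉ nbrs g i := by
    intro x hx hxn
    have hxj : x ≠ j := fun h => hjC (h ▸ hx)
    have : x ∈ C ∩ nbrs (delE g i j) i := by
      rw [Finset.mem_inter, nbrs_delE]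
      exact ⟨hx, Finset.mem_erase.2 ⟨hxj, hxn⟩⟩
    simp [hCN] at this
  set d := (nbrs g i).card with hd
  have hd1 : 1 ≤ d := Finset.card_pos.2 ⟨j, hjn⟩
  -- the sdiff in hwin is the full erase
  have hfull : (nbrs (delE g i j) i) \ C = (nbrs g i).erase j := by
    rw [nbrs_delE]
    apply Finset.sdiff_eq_self_of_disjoint
    rw [Finset.disjoint_left]
    intro x hx hxC
    exact hdisj x hxC (Finset.mem_of_mem_erase hx)
  have hcarderase : ((nbrs g i).erase j).card = d - 1 := by
    rw [Finset.card_erase_of_mem hjn]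
  have hwin' : γ * d < (C.card : ℝ) := by
    rw [hfull, hcarderase] at hwin
    have : (1 : ℝ) + ((d - 1 : ℕ) : ℝ) = d := by
      have : ((d - 1 : ℕ) : ℝ) = (d : ℝ) - 1 := by
        push_cast [hd1]; ring
      rw [this]; ring
    rwa [this] at hwin
  have hdC : d < C.card := by
    have h1 : (d : ℝ) ≤ γ * d := by
      nlinarith [Nat.cast_nonneg (α := ℝ) d]
    have : (d : ℝ) < (C.card : ℝ) := lt_of_le_of_lt h1 hwin'
    exact_mod_cast this
  -- each member of C has nbrs ⊇ C.erase c, so card C ≤ d+1, hence = d+1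
  have hsub : ∀ c ∈ C, C.erase c ⊆ nbrs g c := by
    intro c hc x hx
    rw [mem_nbrs]
    exact hCg hc (Finset.mem_of_mem_erase hx) (Ne.symm (Finset.ne_of_mem_erase hx))
  obtain ⟨c, hc⟩ : C.Nonempty := Finset.card_pos.1 (lt_of_le_of_lt (Nat.zero_le d) hdC)
  have hcard_le : ∀ c ∈ C, C.card - 1 ≤ (nbrs g c).card := by
    intro c hc
    have := Finset.card_le_card (hsub c hc)
    rwa [Finset.card_erase_of_mem hc] at this
  have hCcard : C.card = d + 1 := by
    have h1 := hcard_le c hc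
    have h2 := hmax c
    omega
  -- nbrs g c = C.erase c
  have hnbc : ∀ c ∈ C, nbrs g c = C.erase c := by
    intro c hc
    refine (Finset.eq_of_subset_of_card_le (hsub c hc) ?_).symm
    rw [Finset.card_erase_of_mem hc, hCcard]
    have := hmax c
    omega
  -- S1 at c with clique C.erase c gives γ ≥ d
  have hγd : (d : ℝ) ≤ γ := by
    by_contra hlt
    push_neg at hlt
    apply hS1 c
    refine ⟨C.erase c, hCg.subset (by exact_mod_cast Finset.coe_subset.2 (Finset.erase_subset c C)), Finset.notMem_erase c C, ?_⟩
    have : nbrs g c \ C.erase c = ∅ := by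
      rw [hnbc c hc, Finset.sdiff_self]
    rw [this, Finset.card_erase_of_mem hc, hCcard]
    simp only [Finset.card_empty, Nat.cast_zero, add_zero, mul_one, Nat.add_sub_cancel]
    exact hlt
  -- d*d ≤ γ*d < C.card = d+1 forces d = 1
  have hdd : d = 1 := by
    have h1 : (d : ℝ) * d ≤ γ * d := by
      apply mul_le_mul_of_nonneg_right hγd (Nat.cast_nonneg d)
    have h2 : (d : ℝ) * d < (d : ℝ) + 1 := by
      have : ((C.card : ℕ) : ℝ) = (d : ℝ) + 1 := by rw [hCcard]; push_cast; ring
      rw [this] at hwin'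
      linarith
    have : d * d < d + 1 := by exact_mod_cast h2
    nlinarith
  -- so nbrs g i = {j}, C.card = 2, γ < 2
  have hγ2 : γ < 2 := by
    have : ((C.card : ℕ) : ℝ) = 2 := by rw [hCcard, hdd]; norm_num
    rw [this] at hwin'
    rw [hdd] at hwin'
    simpa using hwin'
  have hnbi : nbrs g i = {j} := by
    apply (Finset.eq_of_subset_of_card_le _ _).symm
    · intro x hx
      rw [Finset.mem_singleton] at hx
      exact hx ▸ hjn
    · rw [← hd, hdd]; simp
  -- c is not adjacent to i and c ≠ i
  have hci : c ≠ i := fun h => hiC (h ▸ hc)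
  have hcj : c ≠ j := fun h => hjC (h ▸ hc)
  have hnadj : ¬ g.Adj i c := by
    intro h
    exact hdisj c hc ((mem_nbrs g i c).2 h)
  -- apply S2 to (i, c) and show j is vulnerable in g + ic
  apply hS2 i c (Ne.symm hci) hnadj j
  refine ⟨{i, c}, ?_, ?_, ?_⟩
  · -- clique {i, c}
    have hadj : (addE g i c).Adj i c := by
      simp only [addE, SimpleGraph.sup_adj, SimpleGraph.fromEdgeSet_adj, Set.mem_singleton_iff]
      exact Or.inr ⟨by simp, Ne.symm hci⟩
    rw [Finset.coe_pair]
    exact SimpleGraph.isClique_pair.mpr fun _ => hadj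
  · simp only [Finset.mem_insert, Finset.mem_singleton]
    push_neg
    exact ⟨Ne.symm hne, Ne.symm hcj⟩
  · have hnj : nbrs (addE g i c) j = nbrs g j := nbrs_addE_other g i c j (Ne.symm hne) (Ne.symm hcj)
    have hnbj : nbrs g j = {i} := by
      apply (Finset.eq_of_subset_of_card_le _ _).symm
      · intro x hx
        rw [Finset.mem_singleton] at hx
        rw [mem_nbrs]
        exact hx ▸ hij.symm
      · calc (nbrs g j).card ≤ d := hmax j
          _ = ({i} : Finset (Fin n)).card := by rw [hdd]; simp
    have hsd : nbrs (addE g i c) j \ {i, c} = ∅ := by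
      rw [hnj, hnbj]
      ext x
      simp only [Finset.mem_sdiff, Finset.mem_singleton, Finset.mem_insert, Finset.notMem_empty, iff_false]
      rintro ⟨rfl, h⟩
      exact h (Or.inl rfl)
    rw [hsd]
    have hcard2 : ({i, c} : Finset (Fin n)).card = 2 := by
      rw [Finset.card_insert_of_notMem (by simpa using hci.symm), Finset.card_singleton]
    rw [hcard2]
    simpa using hγ2
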